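/- Let X be a topological space, V a finite-dimensional real inner product space, and φ : X × V → [0,∞) such that φ(x,·) is a norm with (1/α)‖v‖ ≤ φ(x,v) ≤ α‖v‖ for each x. If φ is upper semicontinuous on X × V, then the dual metric φ*(x,v) := sup { |⟨v,w⟩| / φ(x,w) : w ≠ 0 } is lower semicontinuous on X × V. -/

import Mathlib

open MeasureTheory Filter Topology

theorem stmt_3 {X : Type*} [TopologicalSpace X] {V : Type*} [NormedAddCommGroup V]
    [InnerProductSpace ℝ V] [FiniteDimensional ℝ V] (α : ℝ) (hα : 1 ≤ α)
    (φ : X → V → ℝ)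
    (hhom : ∀ x (c : ℝ) (v : V), φ x (c • v) = |c| * φ x v)
    (hsub : ∀ x (v w : V), φ x (v + w) ≤ φ x v + φ x w)
    (hlow : ∀ x (v : V), (1 / α) * ‖v‖ ≤ φ x v) (hup : ∀ x (v : V), φ x v ≤ α * ‖v‖)
    (husc : UpperSemicontinuous fun p : X × V => φ p.1 p.2) :
    LowerSemicontinuous fun p : X × V =>
      ⨆ w : {w : V // w ≠ 0}, |(inner ℝ p.2 w.1 : ℝ)| / φ p.1 w.1 := by
  have hαpos : (0:ℝ) < α := lt_of_lt_of_le one_pos hα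
  have hdpos : ∀ x (w : V), w ≠ 0 → 0 < φ x w := by
    intro x w hw
    have := hlow x w
    have hnw : 0 < ‖w‖ := norm_pos_iff.mpr hw
    have : 0 < (1/α) * ‖w‖ := by positivity
    linarith [hlow x w]
  -- boundedness of the family
  have hbdd : ∀ p : X × V, BddAbove (Set.range fun w : {w : V // w ≠ 0} =>
      |(inner ℝ p.2 w.1 : ℝ)| / φ p.1 w.1) := by
    intro p
    refine ⟨α * ‖p.2‖, ?_⟩
    rintro _ ⟨w, rfl⟩
    have hd : 0 < φ p.1 w.1 := hdpos _ _ w.2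
    rw [div_le_iff₀ hd]
    have h1 : |(inner ℝ p.2 w.1 : ℝ)| ≤ ‖p.2‖ * ‖w.1‖ := abs_real_inner_le_norm _ _
    have h2 : (1/α) * ‖w.1‖ ≤ φ p.1 w.1 := hlow _ _
    have h3 : α * ‖p.2‖ * ((1/α) * ‖w.1‖) ≤ α * ‖p.2‖ * φ p.1 w.1 := by
      apply mul_le_mul_of_nonneg_left h2; positivity
    have h4 : α * ‖p.2‖ * ((1/α) * ‖w.1‖) = ‖p.2‖ * ‖w.1‖ := by field_simp
    linarith
  refine lowerSemicontinuous_ciSup hbdd ?_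
  rintro ⟨w, hw⟩
  intro p0 y hy
  simp only at hy ⊢
  set c : X × V → ℝ := fun p => |(inner ℝ p.2 w : ℝ)| with hc
  set d : X × V → ℝ := fun p => φ p.1 w with hd
  have hcont : Continuous c := ((continuous_snd.inner continuous_const)).abs
  have hdp : ∀ p : X × V, 0 < d p := fun p => hdpos _ _ hw
  rcases lt_or_ge y 0 with hy0 | hy0
  · filter_upwards with p
    have : 0 ≤ c p / d p := div_nonneg (abs_nonneg _) (hdp p).le
    linarith
  · -- y ≥ 0
    have hkey : y * d p0 < c p0 := (lt_div_iff₀ (hdp p0)).mp hy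
    set ε : ℝ := (c p0 - y * d p0) / (2 * (1 + y)) with hε
    have hεpos : 0 < ε := by
      apply div_pos; linarith; positivity
    have hεeq : ε * (2 * (1 + y)) = c p0 - y * d p0 := by
      rw [hε, div_mul_cancel₀ _ (ne_of_gt (by linarith))]
    -- eventually d p < d p0 + ε
    have htend : Tendsto (fun p : X × V => (p.1, w)) (𝓝 p0) (𝓝 (p0.1, w)) := by
      exact (continuous_fst.prodMk continuous_const).tendsto p0
    have hdev : ∀ᶠ p : X × V in 𝓝 p0, d p < d p0 + ε := by
      have := husc (p0.1, w) (d p0 + ε) (by simpa [hd] using lt_add_of_pos_right (d p0) hεpos)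
      exact htend.eventually this
    have hcev : ∀ᶠ p : X × V in 𝓝 p0, c p0 - ε < c p :=
      hcont.continuousAt.eventually (eventually_gt_nhds (by linarith))
    filter_upwards [hdev, hcev] with p hdp' hcp'
    show y < c p / d p; rw [lt_div_iff₀ (hdp p)]
    have hmul : y * d p ≤ y * (d p0 + ε) := mul_le_mul_of_nonneg_left hdp'.le hy0
    nlinarith [hεpos, hεeq, hmul, hcp']
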